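/- Let φ : ℝⁿ → ℝ be continuously differentiable with compact support and suppose ∫_{ℝⁿ} φ(x)² ϑ_λ(x) dx > 0. Set N = 2 (∫_{ℝⁿ} ‖∇φ(x)‖² ϑ_λ(x) dx) / (∫_{ℝⁿ} φ(x)² ϑ_λ(x) dx). Then for every r > 0, denoting by B_r the open ball of radius r centered at x₀, one has ( 1 − (8λ/r²)(λN + n/2) ) ∫_{ℝⁿ} ‖x − x₀‖² φ(x)² ϑ_λ(x) dx ≤ 8λ (λN + n/2) ∫_{B_r} φ(x)² ϑ_λ(x) dx. -/

import Mathlib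

open Real MeasureTheory RealInnerProductSpace

private lemma aux_integrable {n : ℕ} {γ : Type*} [Zero γ] [TopologicalSpace γ]
    {u : EuclideanSpace ℝ (Fin n) → γ} {w : EuclideanSpace ℝ (Fin n) → ℝ}
    (hu : HasCompactSupport u) (hw : Continuous w)
    (h : ∀ x, u x = 0 → w x = 0) : Integrable w := by
  apply hw.integrable_of_hasCompactSupport
  apply hu.mono
  intro x hx
  simp only [Function.mem_support] at hx ⊢
  exact fun h0 => hx (h x h0)

private lemma theta_hasFDerivAt {n : ℕ} (x₀ : EuclideanSpace ℝ (Fin n)) {lam : ℝ} (hlam : 0 < lam)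
    (x : EuclideanSpace ℝ (Fin n)) :
    HasFDerivAt (fun y : EuclideanSpace ℝ (Fin n) => Real.exp (-‖y - x₀‖ ^ 2 / (4 * lam)))
      ((Real.exp (-‖x - x₀‖ ^ 2 / (4 * lam)) * (-(2 * lam)⁻¹)) • (innerSL ℝ (x - x₀))) x := by
  have h1 : HasFDerivAt (fun y : EuclideanSpace ℝ (Fin n) => y - x₀)
      (ContinuousLinearMap.id ℝ _) x := (hasFDerivAt_id x).sub_const x₀
  have h2 := h1.inner ℝ h1
  have h3 := h2.const_mul (-(4 * lam)⁻¹)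
  have h4 := h3.exp
  have hfun : (fun y : EuclideanSpace ℝ (Fin n) => Real.exp (-‖y - x₀‖ ^ 2 / (4 * lam)))
      = fun y => Real.exp (-(4 * lam)⁻¹ * (inner ℝ (y - x₀) (y - x₀) : ℝ)) := by
    funext y
    rw [real_inner_self_eq_norm_sq]
    ring_nf
  rw [hfun]
  refine h4.congr_fderiv ?_
  ext v
  simp only [ContinuousLinearMap.coe_smul', Pi.smul_apply, innerSL_apply_apply,
    ContinuousLinearMap.coe_comp', Function.comp_apply, ContinuousLinearMap.smul_apply,
    fderivInnerCLM_apply, ContinuousLinearMap.prod_apply, ContinuousLinearMap.coe_id', id_eq,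
    smul_eq_mul]
  rw [real_inner_self_eq_norm_sq, real_inner_comm]
  field_simp
  ring

private lemma key_identity {n : ℕ} (x₀ : EuclideanSpace ℝ (Fin n)) {lam : ℝ} (hlam : 0 < lam)
    {φ : EuclideanSpace ℝ (Fin n) → ℝ} (hφ : ContDiff ℝ 1 φ) (hsupp : HasCompactSupport φ) :
    (2 * lam)⁻¹ * ∫ x : EuclideanSpace ℝ (Fin n),
        ‖x - x₀‖ ^ 2 * φ x ^ 2 * Real.exp (-‖x - x₀‖ ^ 2 / (4 * lam))
      = (n : ℝ) * (∫ x : EuclideanSpace ℝ (Fin n), φ x ^ 2 * Real.exp (-‖x - x₀‖ ^ 2 / (4 * lam)))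
        + ∫ x : EuclideanSpace ℝ (Fin n),
            2 * φ x * (fderiv ℝ φ x (x - x₀)) * Real.exp (-‖x - x₀‖ ^ 2 / (4 * lam)) := by
  classical
  have : (1:ℕ)=1 := rfl
  set θ : EuclideanSpace ℝ (Fin n) → ℝ := fun x => Real.exp (-‖x - x₀‖ ^ 2 / (4 * lam)) with hθdef
  have hφd : Differentiable ℝ φ := hφ.differentiable one_ne_zero
  have hφc : Continuous φ := hφ.continuous
  have hdφc : Continuous (fderiv ℝ φ) := hφ.continuous_fderiv one_ne_zero
  have hsubc : Continuous fun x : EuclideanSpace ℝ (Fin n) => x - x₀ := continuous_id.sub continuous_const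
  have hθc : Continuous θ := by
    exact Real.continuous_exp.comp (((hsubc.norm.pow 2).neg).div_const _)
  -- compact support machinery
  have hu : HasCompactSupport (fun x : EuclideanSpace ℝ (Fin n) => (φ x, fderiv ℝ φ x)) := by
    apply hsupp.mono'
    intro x hx
    simp only [Function.mem_support, ne_eq, Prod.mk_eq_zero, not_and_or] at hx
    rcases hx with h | h
    · exact subset_tsupport φ h
    · exact support_fderiv_subset ℝ h
  have hInt : ∀ w : EuclideanSpace ℝ (Fin n) → ℝ, Continuous w →
      (∀ x, φ x = 0 → fderiv ℝ φ x = 0 → w x = 0) → Integrable w := by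
    intro w hw hw0
    refine aux_integrable hu hw fun x hx => ?_
    rw [Prod.mk_eq_zero] at hx
    exact hw0 x hx.1 hx.2
  -- the function c = φ² θ and its derivative
  set c : EuclideanSpace ℝ (Fin n) → ℝ := fun x => φ x ^ 2 * θ x with hcdef
  have hcc : Continuous c := (hφc.pow 2).mul hθc
  set c' : EuclideanSpace ℝ (Fin n) → (EuclideanSpace ℝ (Fin n) →L[ℝ] ℝ) := fun x =>
    (φ x ^ 2) • ((θ x * (-(2 * lam)⁻¹)) • innerSL ℝ (x - x₀))
      + (θ x) • ((2 * φ x) • fderiv ℝ φ x) with hc'def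
  have hc : ∀ x, HasFDerivAt c (c' x) x := by
    intro x
    have h := (hφd x).hasFDerivAt.mul (hφd x).hasFDerivAt
    have hEq : φ x • fderiv ℝ φ x + φ x • fderiv ℝ φ x = (2 * φ x) • fderiv ℝ φ x := by
      rw [two_mul, add_smul]
    rw [hEq] at h
    simp only [← pow_two] at h
    exact h.mul (theta_hasFDerivAt x₀ hlam x)
  have hc'app : ∀ x v, c' x v
      = φ x ^ 2 * ((θ x * (-(2 * lam)⁻¹)) * ⟪x - x₀, v⟫) + θ x * ((2 * φ x) * fderiv ℝ φ x v) := by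
    intro x v
    simp only [hc'def, ContinuousLinearMap.add_apply, ContinuousLinearMap.coe_smul',
      Pi.smul_apply, innerSL_apply_apply, smul_eq_mul]
  have hc'cont : ∀ v, Continuous fun x => c' x v := by
    intro v
    have : (fun x => c' x v) = fun x =>
        φ x ^ 2 * ((θ x * (-(2 * lam)⁻¹)) * ⟪x - x₀, v⟫) + θ x * ((2 * φ x) * fderiv ℝ φ x v) :=
      funext fun x => hc'app x v
    rw [this]
    exact ((hφc.pow 2).mul ((hθc.mul continuous_const).mul (hsubc.inner continuous_const))).add
      (hθc.mul ((continuous_const.mul hφc).mul (hdφc.clm_apply continuous_const)))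
  have hc'zero : ∀ x, φ x = 0 → fderiv ℝ φ x = 0 → ∀ v, c' x v = 0 := by
    intro x h1 h2 v
    rw [hc'app, h1, h2]
    simp
  -- the basis and the coordinate vector fields
  set e := EuclideanSpace.basisFun (Fin n) ℝ with hedef
  set g : Fin n → EuclideanSpace ℝ (Fin n) → ℝ := fun (i : Fin n) (x : EuclideanSpace ℝ (Fin n)) => c x * ⟪e i, x - x₀⟫ with hgdef
  have hg' : ∀ i x, HasFDerivAt (g i)
      (c x • ((innerSL ℝ (e i)).comp (ContinuousLinearMap.id ℝ (EuclideanSpace ℝ (Fin n))))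
        + (⟪e i, x - x₀⟫) • c' x) x := by
    intro i x
    have h1 : HasFDerivAt (fun y : EuclideanSpace ℝ (Fin n) => y - x₀) (ContinuousLinearMap.id ℝ (EuclideanSpace ℝ (Fin n))) x :=
      (hasFDerivAt_id x).sub_const x₀
    have h2 : HasFDerivAt (fun y : EuclideanSpace ℝ (Fin n) => (⟪e i, y - x₀⟫ : ℝ))
        ((innerSL ℝ (e i)).comp (ContinuousLinearMap.id ℝ (EuclideanSpace ℝ (Fin n)))) x :=
      (innerSL ℝ (e i)).hasFDerivAt.comp x h1
    exact (hc x).mul h2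
  have hfd : ∀ i x, fderiv ℝ (g i) x (e i)
      = c x * ⟪e i, e i⟫ + ⟪e i, x - x₀⟫ * c' x (e i) := by
    intro i x
    rw [(hg' i x).fderiv]
    simp only [ContinuousLinearMap.add_apply, ContinuousLinearMap.coe_smul', Pi.smul_apply,
      ContinuousLinearMap.coe_comp', Function.comp_apply, ContinuousLinearMap.coe_id', id_eq,
      innerSL_apply_apply, smul_eq_mul]
  have hgcont : ∀ i, Continuous (g i) := fun i =>
    hcc.mul (continuous_const.inner hsubc)
  have hgzero : ∀ i x, φ x = 0 → g i x = 0 := by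
    intro i x h
    simp [hgdef, hcdef, h]
  have hfdint : ∀ i, Integrable (fun x => fderiv ℝ (g i) x (e i)) := by
    intro i
    have heq : (fun x => fderiv ℝ (g i) x (e i))
        = fun x => c x * ⟪e i, e i⟫ + ⟪e i, x - x₀⟫ * c' x (e i) := funext fun x => hfd i x
    rw [heq]
    refine hInt _ ((hcc.mul continuous_const).add
      ((continuous_const.inner hsubc).mul (hc'cont (e i)))) ?_
    intro x h1 h2
    rw [hc'zero x h1 h2]
    simp [hcdef, h1]
  -- integration by parts in each coordinate
  have hIBP : ∀ i, ∫ x : EuclideanSpace ℝ (Fin n), fderiv ℝ (g i) x (e i) = 0 := by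
    intro i
    have hgdiff : Differentiable ℝ (g i) := fun x => (hg' i x).differentiableAt
    have h := integral_mul_fderiv_eq_neg_fderiv_mul_of_integrable (μ := (volume : Measure (EuclideanSpace ℝ (Fin n))))
      (f := fun _ : EuclideanSpace ℝ (Fin n) => (1 : ℝ)) (g := g i) (v := e i) ?_ ?_ ?_ (fun x _ => differentiableAt_const 1) (fun x _ => hgdiff x)
    · simpa using h
    · have : (fun x : EuclideanSpace ℝ (Fin n) => fderiv ℝ (fun _ : EuclideanSpace ℝ (Fin n) => (1 : ℝ)) x (e i) * g i x) = fun _ => 0 := by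
        funext x; simp
      rw [this]
      exact integrable_zero _ _ _
    · simpa [one_mul] using hfdint i
    · have : (fun x : EuclideanSpace ℝ (Fin n) => (1 : ℝ) * g i x) = g i := by funext x; simp
      rw [this]
      exact hInt _ (hgcont i) (fun x h _ => hgzero i x h)
  -- summing up: the divergence identity
  have hdiv : ∫ x : EuclideanSpace ℝ (Fin n), ((n : ℝ) * c x + c' x (x - x₀)) = 0 := by
    have hptw : ∀ x : EuclideanSpace ℝ (Fin n), (n : ℝ) * c x + c' x (x - x₀) = ∑ i, fderiv ℝ (g i) x (e i) := by
      intro x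
      have h1 : ∀ i : Fin n, fderiv ℝ (g i) x (e i)
          = c x * ⟪e i, e i⟫ + ⟪e i, x - x₀⟫ * c' x (e i) := fun i => hfd i x
      rw [Finset.sum_congr rfl fun i _ => h1 i, Finset.sum_add_distrib]
      congr 1
      · have : ∀ i : Fin n, (⟪e i, e i⟫ : ℝ) = 1 := by
          intro i
          rw [real_inner_self_eq_norm_sq, e.orthonormal.1 i]
          norm_num
        simp [this, Finset.sum_const, mul_comm]
      · have h2 : ∀ i : Fin n, ⟪e i, x - x₀⟫ * c' x (e i) = c' x (⟪e i, x - x₀⟫ • e i) := by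
          intro i; rw [(c' x).map_smul, smul_eq_mul]
        rw [Finset.sum_congr rfl fun i _ => h2 i, ← map_sum, e.sum_repr' (x - x₀)]
    rw [integral_congr_ae (Filter.Eventually.of_forall hptw)]
    rw [integral_finset_sum _ fun i _ => hfdint i]
    simp [hIBP]
  -- rewrite the divergence identity in explicit form
  have hsplitfun : (fun x : EuclideanSpace ℝ (Fin n) => (n : ℝ) * c x + c' x (x - x₀))
      = fun x : EuclideanSpace ℝ (Fin n) => ((n : ℝ) * (φ x ^ 2 * θ x)
          + 2 * φ x * (fderiv ℝ φ x (x - x₀)) * θ x)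
        + (-(2 * lam)⁻¹) * (‖x - x₀‖ ^ 2 * φ x ^ 2 * θ x) := by
    funext x
    rw [hc'app, real_inner_self_eq_norm_sq]
    simp only [hcdef]
    ring
  have hi1 : Integrable (fun x : EuclideanSpace ℝ (Fin n) => φ x ^ 2 * θ x) :=
    hInt _ ((hφc.pow 2).mul hθc) (by intro x h _; simp [h])
  have hi2 : Integrable (fun x : EuclideanSpace ℝ (Fin n) => ‖x - x₀‖ ^ 2 * φ x ^ 2 * θ x) :=
    hInt _ (((hsubc.norm.pow 2).mul (hφc.pow 2)).mul hθc) (by intro x h _; simp [h])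
  have hi3 : Integrable (fun x : EuclideanSpace ℝ (Fin n) => 2 * φ x * (fderiv ℝ φ x (x - x₀)) * θ x) :=
    hInt _ (((continuous_const.mul hφc).mul (hdφc.clm_apply hsubc)).mul hθc)
      (by intro x h _; simp [h])
  have hIa : Integrable (fun x : EuclideanSpace ℝ (Fin n) =>
      (n : ℝ) * (φ x ^ 2 * θ x) + 2 * φ x * (fderiv ℝ φ x (x - x₀)) * θ x) :=
    (hi1.const_mul _).add hi3
  have hIb : Integrable (fun x : EuclideanSpace ℝ (Fin n) =>
      (-(2 * lam)⁻¹) * (‖x - x₀‖ ^ 2 * φ x ^ 2 * θ x)) := hi2.const_mul _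
  rw [hsplitfun] at hdiv
  rw [integral_add hIa hIb, integral_add (hi1.const_mul _) hi3, integral_const_mul,
    integral_const_mul] at hdiv
  linarith

/-- The frequency-function inequality: for a compactly supported `C¹` function `φ`
with positive weighted `L²` norm, setting
`N = 2 (∫ ‖∇φ‖² ϑ_λ) / (∫ φ² ϑ_λ)`, for every `r > 0` one has
`(1 - (8λ/r²)(λN + n/2)) ∫ ‖x - x₀‖² φ² ϑ_λ ≤ 8λ (λN + n/2) ∫_{B_r} φ² ϑ_λ`. -/
theorem stmt_10 (n : ℕ) (hn : 1 ≤ n) (x₀ : EuclideanSpace ℝ (Fin n)) (lam : ℝ)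
    (hlam : 0 < lam) (φ : EuclideanSpace ℝ (Fin n) → ℝ)
    (hφ : ContDiff ℝ 1 φ) (hsupp : HasCompactSupport φ)
    (hpos : 0 < ∫ x : EuclideanSpace ℝ (Fin n),
        φ x ^ 2 * Real.exp (-‖x - x₀‖ ^ 2 / (4 * lam)))
    (N : ℝ)
    (hN : N = 2 * (∫ x : EuclideanSpace ℝ (Fin n),
        ‖gradient φ x‖ ^ 2 * Real.exp (-‖x - x₀‖ ^ 2 / (4 * lam)))
      / ∫ x : EuclideanSpace ℝ (Fin n),
            φ x ^ 2 * Real.exp (-‖x - x₀‖ ^ 2 / (4 * lam))) :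
    ∀ r : ℝ, 0 < r →
      (1 - 8 * lam / r ^ 2 * (lam * N + (n : ℝ) / 2))
          * ∫ x : EuclideanSpace ℝ (Fin n),
              ‖x - x₀‖ ^ 2 * φ x ^ 2 * Real.exp (-‖x - x₀‖ ^ 2 / (4 * lam))
        ≤ 8 * lam * (lam * N + (n : ℝ) / 2)
            * ∫ x in Metric.ball x₀ r,
                φ x ^ 2 * Real.exp (-‖x - x₀‖ ^ 2 / (4 * lam)) := by
  intro r hr
  classical
  set θ : EuclideanSpace ℝ (Fin n) → ℝ := fun x => Real.exp (-‖x - x₀‖ ^ 2 / (4 * lam))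
    with hθdef
  have hφd : Differentiable ℝ φ := hφ.differentiable one_ne_zero
  have hφc : Continuous φ := hφ.continuous
  have hdφc : Continuous (fderiv ℝ φ) := hφ.continuous_fderiv one_ne_zero
  have hsubc : Continuous fun x : EuclideanSpace ℝ (Fin n) => x - x₀ :=
    continuous_id.sub continuous_const
  have hθc : Continuous θ :=
    Real.continuous_exp.comp (((hsubc.norm.pow 2).neg).div_const _)
  have hu : HasCompactSupport (fun x : EuclideanSpace ℝ (Fin n) => (φ x, fderiv ℝ φ x)) := by
    apply hsupp.mono'
    intro x hx
    simp only [Function.mem_support, ne_eq, Prod.mk_eq_zero, not_and_or] at hx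
    rcases hx with h | h
    · exact subset_tsupport φ h
    · exact support_fderiv_subset ℝ h
  have hInt : ∀ w : EuclideanSpace ℝ (Fin n) → ℝ, Continuous w →
      (∀ x, φ x = 0 → fderiv ℝ φ x = 0 → w x = 0) → Integrable w := by
    intro w hw hw0
    refine aux_integrable hu hw fun x hx => ?_
    rw [Prod.mk_eq_zero] at hx
    exact hw0 x hx.1 hx.2
  have hgradeq : (fun x : EuclideanSpace ℝ (Fin n) => gradient φ x)
      = fun x => (InnerProductSpace.toDual ℝ (EuclideanSpace ℝ (Fin n))).symm (fderiv ℝ φ x) :=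
    rfl
  have hgradc : Continuous fun x : EuclideanSpace ℝ (Fin n) => gradient φ x := by
    rw [hgradeq]
    exact (LinearIsometryEquiv.continuous _).comp hdφc
  -- integrabilities
  have hi1 : Integrable (fun x : EuclideanSpace ℝ (Fin n) => φ x ^ 2 * θ x) :=
    hInt _ ((hφc.pow 2).mul hθc) (by intro x h _; simp [h])
  have hi2 : Integrable (fun x : EuclideanSpace ℝ (Fin n) => ‖x - x₀‖ ^ 2 * φ x ^ 2 * θ x) :=
    hInt _ (((hsubc.norm.pow 2).mul (hφc.pow 2)).mul hθc) (by intro x h _; simp [h])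
  have hi3 : Integrable (fun x : EuclideanSpace ℝ (Fin n) =>
      2 * φ x * (fderiv ℝ φ x (x - x₀)) * θ x) :=
    hInt _ (((continuous_const.mul hφc).mul (hdφc.clm_apply hsubc)).mul hθc)
      (by intro x h _; simp [h])
  have hi4 : Integrable (fun x : EuclideanSpace ℝ (Fin n) => ‖gradient φ x‖ ^ 2 * θ x) := by
    refine hInt _ (((hgradc.norm).pow 2).mul hθc) ?_
    intro x _ h2
    have hg0 : gradient φ x = 0 := by
      show (InnerProductSpace.toDual ℝ (EuclideanSpace ℝ (Fin n))).symm (fderiv ℝ φ x) = 0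
      rw [h2]
      exact map_zero _
    simp [hg0]
  set D := ∫ x : EuclideanSpace ℝ (Fin n), φ x ^ 2 * θ x with hD
  set I := ∫ x : EuclideanSpace ℝ (Fin n), ‖x - x₀‖ ^ 2 * φ x ^ 2 * θ x with hI
  set G := ∫ x : EuclideanSpace ℝ (Fin n), ‖gradient φ x‖ ^ 2 * θ x with hG
  have key : (2 * lam)⁻¹ * I = (n : ℝ) * D
      + ∫ x : EuclideanSpace ℝ (Fin n), 2 * φ x * (fderiv ℝ φ x (x - x₀)) * θ x :=
    key_identity x₀ hlam hφ hsupp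
  -- pointwise bound and integral bound
  have hptw : ∀ x : EuclideanSpace ℝ (Fin n),
      2 * φ x * (fderiv ℝ φ x (x - x₀)) * θ x
        ≤ (4 * lam)⁻¹ * (‖x - x₀‖ ^ 2 * φ x ^ 2 * θ x)
          + 4 * lam * (‖gradient φ x‖ ^ 2 * θ x) := by
    intro x
    have hdg : (inner ℝ (gradient φ x) (x - x₀) : ℝ) = fderiv ℝ φ x (x - x₀) :=
      InnerProductSpace.toDual_symm_apply
    have had : φ x * (fderiv ℝ φ x (x - x₀))
        ≤ |φ x| * (‖gradient φ x‖ * ‖x - x₀‖) := by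
      calc φ x * (fderiv ℝ φ x (x - x₀)) ≤ |φ x * (fderiv ℝ φ x (x - x₀))| := le_abs_self _
        _ = |φ x| * |fderiv ℝ φ x (x - x₀)| := abs_mul _ _
        _ ≤ |φ x| * (‖gradient φ x‖ * ‖x - x₀‖) := by
            apply mul_le_mul_of_nonneg_left _ (abs_nonneg _)
            rw [← hdg]
            exact abs_real_inner_le_norm _ _
    have h3 : 2 * (φ x * fderiv ℝ φ x (x - x₀)) * (4 * lam)
        ≤ ‖x - x₀‖ ^ 2 * φ x ^ 2 + 16 * lam ^ 2 * ‖gradient φ x‖ ^ 2 := by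
      nlinarith [sq_nonneg (‖x - x₀‖ * |φ x| - 4 * lam * ‖gradient φ x‖), sq_abs (φ x),
        had, hlam, norm_nonneg (x - x₀), norm_nonneg (gradient φ x), abs_nonneg (φ x)]
    have h2 : 2 * (φ x * fderiv ℝ φ x (x - x₀))
        ≤ (‖x - x₀‖ ^ 2 * φ x ^ 2 + 16 * lam ^ 2 * ‖gradient φ x‖ ^ 2) / (4 * lam) :=
      (le_div_iff₀ (by positivity)).2 h3
    have hθ0 : (0:ℝ) ≤ θ x := le_of_lt (Real.exp_pos _)
    have h4 := mul_le_mul_of_nonneg_right h2 hθ0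
    calc 2 * φ x * (fderiv ℝ φ x (x - x₀)) * θ x
        = (2 * (φ x * fderiv ℝ φ x (x - x₀))) * θ x := by ring
      _ ≤ ((‖x - x₀‖ ^ 2 * φ x ^ 2 + 16 * lam ^ 2 * ‖gradient φ x‖ ^ 2) / (4 * lam)) * θ x := h4
      _ = (4 * lam)⁻¹ * (‖x - x₀‖ ^ 2 * φ x ^ 2 * θ x)
          + 4 * lam * (‖gradient φ x‖ ^ 2 * θ x) := by
          field_simp
          ring
  have hbound : (∫ x : EuclideanSpace ℝ (Fin n), 2 * φ x * (fderiv ℝ φ x (x - x₀)) * θ x)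
      ≤ (4 * lam)⁻¹ * I + 4 * lam * G := by
    have hgint : Integrable (fun x : EuclideanSpace ℝ (Fin n) =>
        (4 * lam)⁻¹ * (‖x - x₀‖ ^ 2 * φ x ^ 2 * θ x)
          + 4 * lam * (‖gradient φ x‖ ^ 2 * θ x)) := (hi2.const_mul _).add (hi4.const_mul _)
    have h := integral_mono hi3 hgint hptw
    rwa [integral_add (hi2.const_mul _) (hi4.const_mul _), integral_const_mul,
      integral_const_mul] at h
  have hIleq : I ≤ 4 * lam * n * D + 16 * lam ^ 2 * G := by
    have h5 : (4 * lam)⁻¹ * I ≤ (n : ℝ) * D + 4 * lam * G := by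
      have hinv : (2 * lam)⁻¹ = (4 * lam)⁻¹ + (4 * lam)⁻¹ := by
        rw [← two_mul]
        field_simp
        ring
      have hsplit2 : (2 * lam)⁻¹ * I = (4 * lam)⁻¹ * I + (4 * lam)⁻¹ * I := by
        rw [hinv, add_mul]
      linarith [key, hbound, hsplit2]
    calc I = 4 * lam * ((4 * lam)⁻¹ * I) := by
          rw [← mul_assoc, mul_inv_cancel₀ (by positivity : (4:ℝ) * lam ≠ 0), one_mul]
      _ ≤ 4 * lam * ((n : ℝ) * D + 4 * lam * G) := by
          apply mul_le_mul_of_nonneg_left h5 (by positivity)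
      _ = 4 * lam * n * D + 16 * lam ^ 2 * G := by ring
  have hG0 : 0 ≤ G := integral_nonneg fun x =>
    mul_nonneg (sq_nonneg _) (Real.exp_pos _).le
  have hN0 : 0 ≤ N := by
    rw [hN]
    apply div_nonneg (by linarith) hpos.le
  have hC0 : 0 ≤ 8 * lam * (lam * N + (n : ℝ) / 2) := by positivity
  have hDne : D ≠ 0 := ne_of_gt hpos
  have hCD : 8 * lam * (lam * N + (n : ℝ) / 2) * D = 16 * lam ^ 2 * G + 4 * lam * n * D := by
    rw [hN, show 8 * lam * (lam * (2 * G / D) + (n : ℝ) / 2) * D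
      = 8 * lam * lam * (2 * G / D * D) + 4 * lam * n * D by ring, div_mul_cancel₀ _ hDne]
    ring
  have hICD : I ≤ 8 * lam * (lam * N + (n : ℝ) / 2) * D := by rw [hCD]; linarith
  -- splitting into the ball and its complement
  have hball : (∫ x in Metric.ball x₀ r, φ x ^ 2 * θ x)
      + (∫ x in (Metric.ball x₀ r)ᶜ, φ x ^ 2 * θ x) = D :=
    integral_add_compl Metric.isOpen_ball.measurableSet hi1
  have hr2 : (0:ℝ) < r ^ 2 := by positivity
  have htail : (∫ x in (Metric.ball x₀ r)ᶜ, φ x ^ 2 * θ x) ≤ (r ^ 2)⁻¹ * I := by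
    have h1 : (∫ x in (Metric.ball x₀ r)ᶜ, φ x ^ 2 * θ x)
        ≤ ∫ x in (Metric.ball x₀ r)ᶜ, (r ^ 2)⁻¹ * (‖x - x₀‖ ^ 2 * φ x ^ 2 * θ x) := by
      apply setIntegral_mono_on hi1.integrableOn ((hi2.const_mul _).integrableOn)
        Metric.isOpen_ball.measurableSet.compl
      intro x hx
      have hxr : r ≤ ‖x - x₀‖ := by
        simp only [Set.mem_compl_iff, Metric.mem_ball, not_lt, dist_eq_norm] at hx
        exact hx
      have hxr2 : r ^ 2 ≤ ‖x - x₀‖ ^ 2 := by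
        exact pow_le_pow_left₀ hr.le hxr 2
      have h0 : (0:ℝ) ≤ φ x ^ 2 * θ x := mul_nonneg (sq_nonneg _) (Real.exp_pos _).le
      calc φ x ^ 2 * θ x = (r ^ 2)⁻¹ * (r ^ 2 * (φ x ^ 2 * θ x)) := by
            rw [← mul_assoc, inv_mul_cancel₀ hr2.ne', one_mul]
        _ ≤ (r ^ 2)⁻¹ * (‖x - x₀‖ ^ 2 * (φ x ^ 2 * θ x)) := by
            apply mul_le_mul_of_nonneg_left _ (inv_nonneg.2 hr2.le)
            exact mul_le_mul_of_nonneg_right hxr2 h0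
        _ = (r ^ 2)⁻¹ * (‖x - x₀‖ ^ 2 * φ x ^ 2 * θ x) := by ring
    have h2 : (∫ x in (Metric.ball x₀ r)ᶜ, (r ^ 2)⁻¹ * (‖x - x₀‖ ^ 2 * φ x ^ 2 * θ x))
        = (r ^ 2)⁻¹ * ∫ x in (Metric.ball x₀ r)ᶜ, ‖x - x₀‖ ^ 2 * φ x ^ 2 * θ x :=
      integral_const_mul _ _
    have h3 : (∫ x in (Metric.ball x₀ r)ᶜ, ‖x - x₀‖ ^ 2 * φ x ^ 2 * θ x) ≤ I :=
      setIntegral_le_integral hi2 (Filter.Eventually.of_forall fun x =>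
        mul_nonneg (mul_nonneg (sq_nonneg _) (sq_nonneg _)) (Real.exp_pos _).le)
    calc (∫ x in (Metric.ball x₀ r)ᶜ, φ x ^ 2 * θ x)
        ≤ (r ^ 2)⁻¹ * ∫ x in (Metric.ball x₀ r)ᶜ, ‖x - x₀‖ ^ 2 * φ x ^ 2 * θ x := h2 ▸ h1
      _ ≤ (r ^ 2)⁻¹ * I := mul_le_mul_of_nonneg_left h3 (inv_nonneg.2 hr2.le)
  have hchain : I ≤ 8 * lam * (lam * N + (n : ℝ) / 2) * (∫ x in Metric.ball x₀ r, φ x ^ 2 * θ x)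
      + 8 * lam * (lam * N + (n : ℝ) / 2) * ((r ^ 2)⁻¹ * I) := by
    have hDeq : D = (∫ x in Metric.ball x₀ r, φ x ^ 2 * θ x)
        + (∫ x in (Metric.ball x₀ r)ᶜ, φ x ^ 2 * θ x) := hball.symm
    have h1 : 8 * lam * (lam * N + (n : ℝ) / 2) * D
        = 8 * lam * (lam * N + (n : ℝ) / 2) * (∫ x in Metric.ball x₀ r, φ x ^ 2 * θ x)
          + 8 * lam * (lam * N + (n : ℝ) / 2)
            * (∫ x in (Metric.ball x₀ r)ᶜ, φ x ^ 2 * θ x) := by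
      rw [hDeq]; ring
    have h2 := mul_le_mul_of_nonneg_left htail hC0
    linarith [hICD, h1, h2]
  have hexp : (1 - 8 * lam / r ^ 2 * (lam * N + (n : ℝ) / 2)) * I
      = I - 8 * lam * (lam * N + (n : ℝ) / 2) * ((r ^ 2)⁻¹ * I) := by
    rw [div_eq_mul_inv]
    ring
  rw [hexp]
  linarith [hchain]
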